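/- Let I be an ideal in the poset of positive roots of a crystallographic root system Φ, and let X be a subspace of V with Φ_X = Φ ∩ X^⊥. Then I ∩ Φ_X⁺ is an ideal in the poset of positive roots of Φ_X. -/

import Mathlib

open Finset Submodule
open scoped Classical

/-- A (reduced) crystallographic root system in the Euclidean space `ℝⁿ`,
together with a chosen simple system `Δ` and the corresponding positive
roots `Pos`, and the (nonnegative integer) coordinates `coeff β a` of a
positive root `β` with respect to the simple roots. -/
structure CRS (n : ℕ) where
  Φ : Finset (EuclideanSpace ℝ (Fin n))
  Δ : Finset (EuclideanSpace ℝ (Fin n))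
  Pos : Finset (EuclideanSpace ℝ (Fin n))
  coeff : EuclideanSpace ℝ (Fin n) → EuclideanSpace ℝ (Fin n) → ℕ
  zero_notmem : (0 : EuclideanSpace ℝ (Fin n)) ∉ Φ
  span_top : Submodule.span ℝ (Φ : Set (EuclideanSpace ℝ (Fin n))) = ⊤
  Δ_sub : Δ ⊆ Pos
  Pos_sub : Pos ⊆ Φ
  neg_mem : ∀ α ∈ Φ, -α ∈ Φ
  pos_or_neg : ∀ α ∈ Φ, α ∈ Pos ∨ -α ∈ Pos
  not_pos_and_neg : ∀ α ∈ Pos, -α ∉ Pos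
  reduced : ∀ α ∈ Φ, ∀ c : ℝ, c • α ∈ Φ → c = 1 ∨ c = -1
  reflect_mem : ∀ α ∈ Φ, ∀ β ∈ Φ,
    β - ((2 * inner ℝ α β / inner ℝ α α : ℝ)) • α ∈ Φ
  cartan_int : ∀ α ∈ Φ, ∀ β ∈ Φ, ∃ z : ℤ, (2 * inner ℝ α β / inner ℝ α α : ℝ) = z
  Δ_indep : LinearIndependent ℝ (fun a : Δ => (a : EuclideanSpace ℝ (Fin n)))
  pos_eq_sum : ∀ β ∈ Pos, β = ∑ a ∈ Δ, (coeff β a : ℝ) • a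

namespace CRS

variable {n : ℕ}

/-- The height of a positive root: the sum of its coordinates over `Δ`. -/
def ht (R : CRS n) (β : EuclideanSpace ℝ (Fin n)) : ℕ := ∑ a ∈ R.Δ, R.coeff β a

/-- The root order: `rle β α` means `β ≤ α`, i.e. `α - β` is a nonnegative
integer combination of the simple roots. -/
def rle (R : CRS n) (β α : EuclideanSpace ℝ (Fin n)) : Prop :=
  ∃ c : EuclideanSpace ℝ (Fin n) → ℕ, α - β = ∑ a ∈ R.Δ, (c a : ℝ) • a

/-- An ideal of the positive root poset: a downward closed set of positive roots. -/
def IsIdeal (R : CRS n) (I : Finset (EuclideanSpace ℝ (Fin n))) : Prop :=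
  I ⊆ R.Pos ∧ ∀ α ∈ I, ∀ β ∈ R.Pos, R.rle β α → β ∈ I

/-- Irreducibility: the simple system cannot be split into two nonempty
mutually orthogonal parts. -/
def Irred (R : CRS n) : Prop :=
  ∀ s t : Finset (EuclideanSpace ℝ (Fin n)), s ∪ t = R.Δ → Disjoint s t →
    (∀ a ∈ s, ∀ b ∈ t, (inner ℝ a b : ℝ) = 0) → s = ∅ ∨ t = ∅

/-- The positive roots of the localized root system `Φ_X = Φ ∩ X^⊥`. -/
noncomputable def PosIn (R : CRS n) (X : Submodule ℝ (EuclideanSpace ℝ (Fin n))) :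
    Finset (EuclideanSpace ℝ (Fin n)) :=
  R.Pos.filter (fun β => β ∈ Xᗮ)

end CRS

/-- The hyperplane orthogonal to a root `β`. -/
noncomputable def H {n : ℕ} (β : EuclideanSpace ℝ (Fin n)) : Submodule ℝ (EuclideanSpace ℝ (Fin n)) :=
  (ℝ ∙ β)ᗮ

/-- The simple system (the indecomposable elements) of a positive system `P`. -/
noncomputable def simpleOf {n : ℕ} (P : Finset (EuclideanSpace ℝ (Fin n))) :
    Finset (EuclideanSpace ℝ (Fin n)) :=
  P.filter (fun γ => ¬ ∃ β₁ ∈ P, ∃ β₂ ∈ P, γ = β₁ + β₂)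

/-- The order on a positive system `P`: `γ ≤ δ` iff `δ - γ` is a nonnegative
integer combination of the simple system of `P`. -/
def leIn {n : ℕ} (P : Finset (EuclideanSpace ℝ (Fin n)))
    (γ δ : EuclideanSpace ℝ (Fin n)) : Prop :=
  ∃ c : EuclideanSpace ℝ (Fin n) → ℕ, δ - γ = ∑ s ∈ simpleOf P, (c s : ℝ) • s

/-- if `I` is an ideal of `Φ⁺` and `X` a subspace, then
`I ∩ Φ_X⁺` is an ideal in the positive root poset of `Φ_X = Φ ∩ X^⊥`. -/
theorem ideal_inter_localization_isIdeal {n : ℕ} (R : CRS n)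
    (I : Finset (EuclideanSpace ℝ (Fin n))) (hI : R.IsIdeal I)
    (X : Submodule ℝ (EuclideanSpace ℝ (Fin n))) :
    ∀ δ ∈ I ∩ R.PosIn X, ∀ γ ∈ R.PosIn X, leIn (R.PosIn X) γ δ →
      γ ∈ I ∩ R.PosIn X := by
  intro δ hδ γ hγ hle
  rw [Finset.mem_inter] at hδ ⊢
  refine ⟨?_, hγ⟩
  obtain ⟨c, hc⟩ := hle
  have hPsub : R.PosIn X ⊆ R.Pos := Finset.filter_subset _ _
  have hsub : simpleOf (R.PosIn X) ⊆ R.Pos :=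
    fun s hs => hPsub (Finset.mem_of_mem_filter _ hs)
  refine hI.2 δ hδ.1 γ (hPsub hγ)
    ⟨fun a => ∑ s ∈ simpleOf (R.PosIn X), c s * R.coeff s a, ?_⟩
  rw [hc]
  calc ∑ s ∈ simpleOf (R.PosIn X), (c s : ℝ) • s
      = ∑ s ∈ simpleOf (R.PosIn X), (c s : ℝ) •
          (∑ a ∈ R.Δ, (R.coeff s a : ℝ) • a) := by
        refine Finset.sum_congr rfl fun s hs => ?_
        rw [← R.pos_eq_sum s (hsub hs)]
    _ = ∑ a ∈ R.Δ,
          ((∑ s ∈ simpleOf (R.PosIn X), c s * R.coeff s a : ℕ) : ℝ) • a := by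
        simp_rw [Finset.smul_sum, smul_smul]
        rw [Finset.sum_comm]
        refine Finset.sum_congr rfl fun a _ => ?_
        push_cast
        rw [Finset.sum_smul]
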